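/- Let φ be a sentence over relational signature τ with ≼ ∉ τ and P ∉ τ a fresh unary predicate, and let ψ := ∃x (P(x) ∧ ∀y (y ≼ x)). If ¬φ has no model with a one-element domain, then φ is valid over all finite τ-structures if and only if the sentence (¬φ) → ψ is order-invariant over finite (τ ∪ {P})-structures. -/

import Mathlib

open FirstOrder Language

/-- Any finite type admits a linear order with a prescribed maximum element. -/
lemma exists_linearOrder_with_top (M : Type) [Fintype M] [DecidableEq M] (a : M) :
    ∃ r : M → M → Prop, IsLinearOrder M r ∧ ∀ y, r y a := by
  classical
  let e := Fintype.equivFin M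
  let f : M → Lex (Bool × Fin (Fintype.card M)) := fun m => toLex (decide (m = a), e m)
  have hf : Function.Injective f := by
    intro x y hxy
    have : (decide (x = a), e x) = (decide (y = a), e y) := hxy
    exact e.injective (congrArg Prod.snd this)
  refine ⟨fun y x => f y ≤ f x, ?_, ?_⟩
  · exact { refl := fun x => le_refl (f x),
            trans := fun x y z h1 h2 => le_trans h1 h2,
            antisymm := fun x y h1 h2 => hf (le_antisymm h1 h2),
            total := fun x y => le_total (f x) (f y) }
  · intro y
    by_cases hy : y = a
    · subst hy; exact le_refl _
    · have : f y < f a := by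
        refine Prod.Lex.lt_iff.mpr (Or.inl ?_)
        simp [f, hy]
      exact le_of_lt this

/-- Correctness of the reduction from finite validity to order-invariance:
for a sentence `φ` over a relational signature `τ` (with `≼, P ∉ τ`), if `¬φ`
has no model with a one-element domain, then `φ` is valid over all finite
`τ`-structures iff the sentence `(¬φ) → ∃x (P(x) ∧ ∀y (y ≼ x))` is
order-invariant over finite `(τ ∪ {P})`-structures (stated semantically:
for all finite structures, interpretations `p` of `P` and linear orders
`r, r'`, the truth values of `(¬φ) → ψ` under `r` and under `r'` agree). -/
theorem validity_iff_order_invariance (L : Language) [L.IsRelational]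
    (φ : L.Sentence)
    (hone : ∀ (M : Type) (_ : L.Structure M) (_ : Fintype M),
      Nonempty M → Fintype.card M = 1 → M ⊨ φ) :
    (∀ (M : Type) (_ : L.Structure M) (_ : Fintype M), Nonempty M → M ⊨ φ) ↔
    (∀ (M : Type) (_ : L.Structure M) (_ : Fintype M), Nonempty M →
      ∀ (p : M → Prop) (r r' : M → M → Prop),
        IsLinearOrder M r → IsLinearOrder M r' →
        (((¬ M ⊨ φ) → ∃ x, p x ∧ ∀ y, r y x) ↔
         ((¬ M ⊨ φ) → ∃ x, p x ∧ ∀ y, r' y x))) := by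
  classical
  constructor
  · intro hval M iM iF hne p r r' _ _
    have := hval M iM iF hne
    constructor <;> intro _ hn <;> exact absurd this hn
  · intro hinv M iM iF hne
    by_contra hφ
    have hcard1 : Fintype.card M ≠ 1 := fun h => hφ (hone M iM iF hne h)
    have hpos : 0 < Fintype.card M := Fintype.card_pos_iff.mpr hne
    have h2 : 1 < Fintype.card M := lt_of_le_of_ne hpos (Ne.symm hcard1)
    obtain ⟨a, b, hab⟩ := Fintype.exists_pair_of_one_lt_card h2
    obtain ⟨r, hr, hra⟩ := exists_linearOrder_with_top M a
    obtain ⟨r', hr', hr'b⟩ := exists_linearOrder_with_top M b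
    have h := (hinv M iM iF hne (· = a) r r' hr hr').mp
      (fun _ => ⟨a, rfl, hra⟩) hφ
    obtain ⟨x, hx, hxmax⟩ := h
    subst hx
    exact hab (hr'.toIsPartialOrder.toAntisymm.antisymm _ _ (hr'b x) (hxmax b))
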